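/- The function g_m is strictly decreasing on [0,1] and satisfies g_m(x) = G₋ₘ'(x)/t_m there. Consequently: if g_m(0) ≤ 0 then x = 0 maximizes G₋ₘ over [0,1]; if g_m(1) ≥ 0 then x = 1 maximizes G₋ₘ over [0,1]; and if g_m(0) > 0 > g_m(1) then there is a unique x₀ ∈ (0,1) with g_m(x₀) = 0 and this x₀ maximizes G₋ₘ over [0,1]. -/

import Mathlib

/-- The single-group objective `G₋ₘ(x)` of problem P3. -/
noncomputable def Gminus (M : ℕ) (B : ℝ) (t ρi ρo : Fin M → ℝ) (m : Fin M)
    (c : Fin M → ℝ) (x : ℝ) : ℝ :=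
  t m * (1 - x) *
      (1 - Real.exp (-(B * t m * ρi m * x) -
        B * ∑ k ∈ Finset.univ.erase m, t k * ρo k * c k)) +
    ∑ k ∈ Finset.univ.erase m, t k * (1 - c k) *
      (1 - Real.exp (-(B * t m * ρo m * x) -
        (B * (∑ q ∈ (Finset.univ.erase m).erase k, t q * ρo q * c q) +
          B * t k * ρi k * c k)))

/-- The function `g_m(x)` of Proposition 5.1, with
`I_m = ∑_{k ≠ m} Q_k exp(−Φ_k)`. -/
noncomputable def gm (M : ℕ) (B : ℝ) (t ρi ρo : Fin M → ℝ) (m : Fin M)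
    (c : Fin M → ℝ) (x : ℝ) : ℝ :=
  (1 + B * t m * ρi m * (1 - x)) *
      Real.exp (-(B * t m * ρi m * x) -
        B * ∑ k ∈ Finset.univ.erase m, t k * ρo k * c k) +
    B * (∑ k ∈ Finset.univ.erase m, t k * (1 - c k) *
        Real.exp (-(B * (∑ q ∈ (Finset.univ.erase m).erase k, t q * ρo q * c q) +
          B * t k * ρi k * c k))) * ρo m *
      Real.exp (-(B * t m * ρo m * x)) - 1


lemma exp_lin_hasDeriv (a φ x : ℝ) :
    HasDerivAt (fun x => Real.exp (-(a * x) - φ)) (-a * Real.exp (-(a * x) - φ)) x := by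
  have h := (((hasDerivAt_id x).const_mul a).fun_neg.sub_const φ).exp
  simp only [id_eq] at h
  convert h using 1
  ring

lemma G_hasDeriv (T a b φ : ℝ) {ι : Type*} (s : Finset ι) (Q Φ : ι → ℝ) (x : ℝ) :
    HasDerivAt (fun x => T * (1 - x) * (1 - Real.exp (-(a * x) - φ)) +
      ∑ k ∈ s, Q k * (1 - Real.exp (-(b * x) - Φ k)))
      (T * ((1 + a * (1 - x)) * Real.exp (-(a * x) - φ) - 1) +
        b * (∑ k ∈ s, Q k * Real.exp (-(Φ k))) * Real.exp (-(b * x))) x := by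
  have h1 : HasDerivAt (fun x : ℝ => 1 - Real.exp (-(a * x) - φ))
      (a * Real.exp (-(a * x) - φ)) x := by
    have := (exp_lin_hasDeriv a φ x).const_sub 1
    exact this.congr_deriv (by ring)
  have h2 : HasDerivAt (fun x : ℝ => T * (1 - x)) (-T) x := by
    have := ((hasDerivAt_id x).const_sub 1).const_mul T
    exact this.congr_deriv (by ring)
  have h3 := h2.fun_mul h1
  have h4 : HasDerivAt (fun x => ∑ k ∈ s, Q k * (1 - Real.exp (-(b * x) - Φ k)))
      (∑ k ∈ s, Q k * (b * Real.exp (-(b * x) - Φ k))) x := by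
    apply HasDerivAt.fun_sum
    intro k _
    have h : HasDerivAt (fun x : ℝ => 1 - Real.exp (-(b * x) - Φ k))
        (b * Real.exp (-(b * x) - Φ k)) x := by
      have := (exp_lin_hasDeriv b (Φ k) x).const_sub 1
      exact this.congr_deriv (by ring)
    exact h.const_mul (Q k)
  have h5 := h3.fun_add h4
  refine h5.congr_deriv ?_
  have hsum : ∑ k ∈ s, Q k * (b * Real.exp (-(b * x) - Φ k))
      = b * (∑ k ∈ s, Q k * Real.exp (-(Φ k))) * Real.exp (-(b * x)) := by
    rw [Finset.mul_sum, Finset.sum_mul]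
    refine Finset.sum_congr rfl fun k _ => ?_
    rw [sub_eq_add_neg, Real.exp_add]
    ring
  rw [hsum]; ring

lemma g_hasDeriv (a b φ C x : ℝ) :
    HasDerivAt (fun x => (1 + a * (1 - x)) * Real.exp (-(a * x) - φ) +
      C * Real.exp (-(b * x)) - 1)
      (-(a * (2 + a * (1 - x)) * Real.exp (-(a * x) - φ)) - C * b * Real.exp (-(b * x))) x := by
  have h1 : HasDerivAt (fun x : ℝ => 1 + a * (1 - x)) (-a) x := by
    have := (((hasDerivAt_id x).const_sub 1).const_mul a).const_add 1
    exact this.congr_deriv (by ring)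
  have h2 := h1.fun_mul (exp_lin_hasDeriv a φ x)
  have h3 : HasDerivAt (fun x : ℝ => C * Real.exp (-(b * x))) (C * (-b * Real.exp (-(b * x)))) x := by
    have := (exp_lin_hasDeriv b 0 x).const_mul C
    simp only [sub_zero] at this
    exact this
  have := (h2.fun_add h3).sub_const 1
  refine this.congr_deriv ?_
  ring

/-- `g_m` is strictly decreasing on `[0,1]` and equals
`G₋ₘ'(x)/t_m` there; consequently, if `g_m(0) ≤ 0` then `0` maximizes `G₋ₘ` on
`[0,1]`, if `g_m(1) ≥ 0` then `1` maximizes it, and if `g_m(0) > 0 > g_m(1)` then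
`g_m` has a unique zero `x₀ ∈ (0,1)` which maximizes `G₋ₘ` on `[0,1]`. -/
theorem stmt_18 (M : ℕ) (hM : 1 ≤ M) (B : ℝ) (hB : 0 < B)
    (t ρi ρo : Fin M → ℝ) (ht : ∀ i, 0 < t i)
    (hρi : ∀ i, 0 < ρi i ∧ ρi i ≤ 1) (hρo : ∀ i, 0 < ρo i ∧ ρo i ≤ 1)
    (m : Fin M) (c : Fin M → ℝ) (hc : ∀ k, k ≠ m → 0 ≤ c k ∧ c k ≤ 1) :
    StrictAntiOn (gm M B t ρi ρo m c) (Set.Icc (0 : ℝ) 1) ∧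
    (∀ x ∈ Set.Icc (0 : ℝ) 1,
      gm M B t ρi ρo m c x = deriv (Gminus M B t ρi ρo m c) x / t m) ∧
    (gm M B t ρi ρo m c 0 ≤ 0 →
      ∀ y ∈ Set.Icc (0 : ℝ) 1, Gminus M B t ρi ρo m c y ≤ Gminus M B t ρi ρo m c 0) ∧
    (0 ≤ gm M B t ρi ρo m c 1 →
      ∀ y ∈ Set.Icc (0 : ℝ) 1, Gminus M B t ρi ρo m c y ≤ Gminus M B t ρi ρo m c 1) ∧
    (0 < gm M B t ρi ρo m c 0 → gm M B t ρi ρo m c 1 < 0 →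
      ∃ x₀ ∈ Set.Ioo (0 : ℝ) 1, gm M B t ρi ρo m c x₀ = 0 ∧
        (∀ y ∈ Set.Ioo (0 : ℝ) 1, gm M B t ρi ρo m c y = 0 → y = x₀) ∧
        ∀ y ∈ Set.Icc (0 : ℝ) 1,
          Gminus M B t ρi ρo m c y ≤ Gminus M B t ρi ρo m c x₀) := by
  have htm := ht m
  have ha : 0 < B * t m * ρi m := by
    have := (hρi m).1; positivity
  have hb : 0 < B * t m * ρo m := by
    have := (hρo m).1; positivity
  have hS : 0 ≤ ∑ k ∈ Finset.univ.erase m, t k * (1 - c k) *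
      Real.exp (-(B * (∑ q ∈ (Finset.univ.erase m).erase k, t q * ρo q * c q) +
        B * t k * ρi k * c k)) := by
    refine Finset.sum_nonneg fun k hk => ?_
    have hck := hc k (Finset.ne_of_mem_erase hk)
    have := (ht k).le
    have h1 : (0:ℝ) ≤ 1 - c k := by linarith [hck.2]
    positivity
  have hC : 0 ≤ B * (∑ k ∈ Finset.univ.erase m, t k * (1 - c k) *
      Real.exp (-(B * (∑ q ∈ (Finset.univ.erase m).erase k, t q * ρo q * c q) +
        B * t k * ρi k * c k))) * ρo m := by
    exact mul_nonneg (mul_nonneg hB.le hS) (hρo m).1.le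
  -- derivative of gm
  have hgkey : ∀ x : ℝ, HasDerivAt (gm M B t ρi ρo m c)
      (-((B * t m * ρi m) * (2 + (B * t m * ρi m) * (1 - x)) *
          Real.exp (-((B * t m * ρi m) * x) -
            B * ∑ k ∈ Finset.univ.erase m, t k * ρo k * c k)) -
        (B * (∑ k ∈ Finset.univ.erase m, t k * (1 - c k) *
          Real.exp (-(B * (∑ q ∈ (Finset.univ.erase m).erase k, t q * ρo q * c q) +
            B * t k * ρi k * c k))) * ρo m) * (B * t m * ρo m) *
          Real.exp (-((B * t m * ρo m) * x))) x := fun x =>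
    g_hasDeriv (B * t m * ρi m) (B * t m * ρo m)
      (B * ∑ k ∈ Finset.univ.erase m, t k * ρo k * c k)
      (B * (∑ k ∈ Finset.univ.erase m, t k * (1 - c k) *
        Real.exp (-(B * (∑ q ∈ (Finset.univ.erase m).erase k, t q * ρo q * c q) +
          B * t k * ρi k * c k))) * ρo m) x
  -- derivative of Gminus
  have hGkey : ∀ x : ℝ, HasDerivAt (Gminus M B t ρi ρo m c)
      (t m * gm M B t ρi ρo m c x) x := by
    intro x
    have h := G_hasDeriv (t m) (B * t m * ρi m) (B * t m * ρo m)
      (B * ∑ k ∈ Finset.univ.erase m, t k * ρo k * c k)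
      (Finset.univ.erase m) (fun k => t k * (1 - c k))
      (fun k => B * (∑ q ∈ (Finset.univ.erase m).erase k, t q * ρo q * c q) +
        B * t k * ρi k * c k) x
    have hval : t m * gm M B t ρi ρo m c x =
        t m * ((1 + (B * t m * ρi m) * (1 - x)) *
            Real.exp (-((B * t m * ρi m) * x) -
              B * ∑ k ∈ Finset.univ.erase m, t k * ρo k * c k) - 1) +
          (B * t m * ρo m) * (∑ k ∈ Finset.univ.erase m, t k * (1 - c k) *
            Real.exp (-(B * (∑ q ∈ (Finset.univ.erase m).erase k, t q * ρo q * c q) +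
              B * t k * ρi k * c k))) * Real.exp (-((B * t m * ρo m) * x)) := by
      unfold gm; ring
    rw [hval]
    exact h
  have hgcont : Continuous (gm M B t ρi ρo m c) := by
    have : Differentiable ℝ (gm M B t ρi ρo m c) := fun x => (hgkey x).differentiableAt
    exact this.continuous
  have hGcont : Continuous (Gminus M B t ρi ρo m c) := by
    have : Differentiable ℝ (Gminus M B t ρi ρo m c) := fun x => (hGkey x).differentiableAt
    exact this.continuous
  have hanti : StrictAntiOn (gm M B t ρi ρo m c) (Set.Icc (0:ℝ) 1) := by
    apply strictAntiOn_of_deriv_neg (convex_Icc 0 1) hgcont.continuousOn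
    intro x hx
    rw [interior_Icc] at hx
    rw [(hgkey x).deriv]
    have e1 := Real.exp_pos (-((B * t m * ρi m) * x) -
      B * ∑ k ∈ Finset.univ.erase m, t k * ρo k * c k)
    have e2 := Real.exp_pos (-((B * t m * ρo m) * x))
    have h1 : 0 < (B * t m * ρi m) * (2 + (B * t m * ρi m) * (1 - x)) := by
      have h1x : 0 < 1 - x := by linarith [hx.2]
      have hp : 0 < 2 + (B * t m * ρi m) * (1 - x) := by nlinarith [mul_pos ha h1x]
      exact mul_pos ha hp
    have h2 : 0 ≤ (B * (∑ k ∈ Finset.univ.erase m, t k * (1 - c k) *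
        Real.exp (-(B * (∑ q ∈ (Finset.univ.erase m).erase k, t q * ρo q * c q) +
          B * t k * ρi k * c k))) * ρo m) * (B * t m * ρo m) *
        Real.exp (-((B * t m * ρo m) * x)) :=
      mul_nonneg (mul_nonneg hC hb.le) e2.le
    nlinarith
  -- generic monotonicity helpers
  have Gmono : ∀ u v : ℝ, (∀ x ∈ Set.Ioo u v, 0 ≤ gm M B t ρi ρo m c x) →
      MonotoneOn (Gminus M B t ρi ρo m c) (Set.Icc u v) := by
    intro u v h
    apply monotoneOn_of_deriv_nonneg (convex_Icc u v) hGcont.continuousOn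
    · intro x _; exact (hGkey x).differentiableAt.differentiableWithinAt
    · intro x hx
      rw [interior_Icc] at hx
      rw [(hGkey x).deriv]
      exact mul_nonneg htm.le (h x hx)
  have Ganti : ∀ u v : ℝ, (∀ x ∈ Set.Ioo u v, gm M B t ρi ρo m c x ≤ 0) →
      AntitoneOn (Gminus M B t ρi ρo m c) (Set.Icc u v) := by
    intro u v h
    apply antitoneOn_of_deriv_nonpos (convex_Icc u v) hGcont.continuousOn
    · intro x _; exact (hGkey x).differentiableAt.differentiableWithinAt
    · intro x hx
      rw [interior_Icc] at hx
      rw [(hGkey x).deriv]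
      exact mul_nonpos_of_nonneg_of_nonpos htm.le (h x hx)
  refine ⟨hanti, ?_, ?_, ?_, ?_⟩
  · intro x _
    rw [(hGkey x).deriv, mul_div_cancel_left₀ _ (ne_of_gt htm)]
  · intro h0 y hy
    have hA := Ganti 0 1 (fun x hx => le_of_lt (lt_of_lt_of_le
      (hanti (Set.left_mem_Icc.mpr zero_le_one) ⟨hx.1.le, hx.2.le⟩ hx.1) h0))
    exact hA (Set.left_mem_Icc.mpr zero_le_one) hy hy.1
  · intro h1 y hy
    have hA := Gmono 0 1 (fun x hx => le_of_lt (lt_of_le_of_lt h1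
      (hanti ⟨hx.1.le, hx.2.le⟩ (Set.right_mem_Icc.mpr zero_le_one) hx.2)))
    exact hA hy (Set.right_mem_Icc.mpr zero_le_one) hy.2
  · intro h0 h1
    have hsub := intermediate_value_Ioo' (zero_le_one (α := ℝ)) hgcont.continuousOn
    have h0mem : (0:ℝ) ∈ Set.Ioo (gm M B t ρi ρo m c 1) (gm M B t ρi ρo m c 0) := ⟨h1, h0⟩
    obtain ⟨x₀, hx₀, hgx₀⟩ := hsub h0mem
    refine ⟨x₀, hx₀, hgx₀, ?_, ?_⟩
    · intro y hy hgy
      exact hanti.injOn ⟨hy.1.le, hy.2.le⟩ ⟨hx₀.1.le, hx₀.2.le⟩ (hgy.trans hgx₀.symm)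
    · intro y hy
      have hm : MonotoneOn (Gminus M B t ρi ρo m c) (Set.Icc 0 x₀) := by
        refine Gmono 0 x₀ fun x hx => le_of_lt ?_
        have := hanti ⟨hx.1.le, (hx.2.trans hx₀.2).le⟩ ⟨hx₀.1.le, hx₀.2.le⟩ hx.2
        linarith [hgx₀ ▸ this]
      have han : AntitoneOn (Gminus M B t ρi ρo m c) (Set.Icc x₀ 1) := by
        refine Ganti x₀ 1 fun x hx => le_of_lt ?_
        have := hanti ⟨hx₀.1.le, hx₀.2.le⟩ ⟨(hx₀.1.trans hx.1).le, hx.2.le⟩ hx.1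
        linarith [hgx₀ ▸ this]
      rcases le_total y x₀ with h | h
      · exact hm ⟨hy.1, h⟩ ⟨hx₀.1.le, le_refl _⟩ h
      · exact han ⟨le_refl _, hx₀.2.le⟩ ⟨h, hy.2⟩ h
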